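/- Let f(x) be a monic polynomial over a field F, and let a, b be positive integers with a ∣ b. If f{a} is reducible over F, then f{b} is reducible over F. -/

import Mathlib

open Polynomial

/-- For a polynomial `g` over a field `K`, the polynomial whose roots (in `K`)
are the `m`-th powers of the roots of `g`. -/
noncomputable def pTwist {K : Type*} [Field K] (m : ℕ) (g : Polynomial K) : Polynomial K :=
  (g.roots.map (fun x => X - C (x ^ m))).prod

/-- For a monic polynomial `f` over `F` splitting over the algebraic closure as
`∏ (X - xᵢ)`, the polynomial `f{m} = ∏ (X - xᵢ^m)`. -/
noncomputable def twist {F : Type*} [Field F] (m : ℕ) (f : Polynomial F) :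
    Polynomial (AlgebraicClosure F) :=
  pTwist m (f.map (algebraMap F (AlgebraicClosure F)))


theorem twist_natDegree {F : Type*} [Field F] (m : ℕ) (f : Polynomial F) (hf : f.Monic) :
    (twist m f).natDegree = f.natDegree := by
  rw [twist, pTwist]
  rw [show (Multiset.map (fun x => X - C (x ^ m)) (f.map (algebraMap F (AlgebraicClosure F))).roots)
      = Multiset.map (fun y => X - C y) ((f.map (algebraMap F (AlgebraicClosure F))).roots.map (· ^ m)) by
    rw [Multiset.map_map]; rfl]
  rw [natDegree_multiset_prod_X_sub_C_eq_card, Multiset.card_map]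
  rw [splits_iff_card_roots.1 (IsAlgClosed.splits _)]
  exact natDegree_map _

theorem twist_root {F : Type*} [Field F] (m : ℕ) (f : Polynomial F)
    {x : AlgebraicClosure F} (hx : x ∈ (f.map (algebraMap F (AlgebraicClosure F))).roots) :
    (twist m f).eval (x ^ m) = 0 := by
  rw [twist, pTwist, eval_multiset_prod]
  apply Multiset.prod_eq_zero
  simp only [Multiset.mem_map]
  exact ⟨X - C (x ^ m), ⟨x, hx, rfl⟩, by simp⟩


/-- If `a ∣ b` and `f{a}` is reducible over `F`, then `f{b}` is reducible over `F`. -/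
theorem twist_reducible {F : Type*} [Field F] (f : Polynomial F) (hf : f.Monic)
    (hdeg : 2 ≤ f.natDegree) (a b : ℕ) (ha : 0 < a) (hb : 0 < b) (hab : a ∣ b)
    (fa fb : Polynomial F) (hfa : fa.Monic) (hfb : fb.Monic)
    (hfa' : fa.map (algebraMap F (AlgebraicClosure F)) = twist a f)
    (hfb' : fb.map (algebraMap F (AlgebraicClosure F)) = twist b f)
    (hred : ¬ Irreducible fa) :
    ¬ Irreducible fb := by
  intro hirr
  apply hred
  set K := AlgebraicClosure F
  have hnb : fb.natDegree = f.natDegree := by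
    rw [← natDegree_map (algebraMap F K) (p := fb), hfb', twist_natDegree b f hf]
  have hna : fa.natDegree = f.natDegree := by
    rw [← natDegree_map (algebraMap F K) (p := fa), hfa', twist_natDegree a f hf]
  have hfmap : f.map (algebraMap F K) ≠ 0 := (hf.map _).ne_zero
  obtain ⟨x, hx⟩ : ∃ x, (f.map (algebraMap F K)).eval x = 0 :=
    IsAlgClosed.exists_root _ (by
      rw [degree_map, degree_eq_natDegree hf.ne_zero, ← Nat.cast_zero, Ne, Nat.cast_inj]
      omega)
  have hxr : x ∈ (f.map (algebraMap F K)).roots := by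
    rw [mem_roots hfmap]; exact hx
  have hint : ∀ y : K, IsIntegral F y := fun y => Algebra.IsIntegral.isIntegral y
  have hevb : aeval (x ^ b) fb = 0 := by
    rw [aeval_def, ← eval_map, hfb']; exact twist_root b f hxr
  have heva : aeval (x ^ a) fa = 0 := by
    rw [aeval_def, ← eval_map, hfa']; exact twist_root a f hxr
  have hmin : minpoly F (x ^ b) = fb := (minpoly.eq_of_irreducible_of_monic hirr hevb hfb).symm
  -- field degree comparison
  obtain ⟨c, rfl⟩ := hab
  have hle : IntermediateField.adjoin F {x ^ (a * c)} ≤ IntermediateField.adjoin F {x ^ a} := by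
    rw [IntermediateField.adjoin_simple_le_iff, pow_mul]
    exact pow_mem (IntermediateField.mem_adjoin_simple_self F (x ^ a)) c
  haveI : FiniteDimensional F (IntermediateField.adjoin F {x ^ a}) :=
    IntermediateField.adjoin.finiteDimensional (hint _)
  haveI : Module.Finite F (IntermediateField.adjoin F {x ^ a}).toSubmodule :=
    ‹FiniteDimensional F (IntermediateField.adjoin F {x ^ a})›
  have h1 : (minpoly F (x ^ (a * c))).natDegree ≤ (minpoly F (x ^ a)).natDegree := by
    rw [← IntermediateField.adjoin.finrank (hint _), ← IntermediateField.adjoin.finrank (hint _)]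
    exact Submodule.finrank_mono
      (show (IntermediateField.adjoin F {x ^ (a * c)}).toSubmodule ≤
        (IntermediateField.adjoin F {x ^ a}).toSubmodule from hle)
  have h2 : (minpoly F (x ^ a)).natDegree ≤ fa.natDegree :=
    natDegree_le_of_dvd (minpoly.dvd F _ heva) hfa.ne_zero
  have h3 : fa.natDegree ≤ (minpoly F (x ^ a)).natDegree := by
    rw [hna, ← hnb, ← hmin]; exact h1
  have : fa = minpoly F (x ^ a) :=
    eq_of_monic_of_dvd_of_natDegree_le (minpoly.monic (hint _)) hfa (minpoly.dvd F _ heva) h3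
  rw [this]
  exact minpoly.irreducible (hint _)
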